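/- For the triangle K_3, sep_2(K_3) = 2/3 while sep_2*(K_3) = 1/2; in particular the fractional relaxation can be strictly smaller than the integral value. -/

import Mathlib

open Finset

open scoped Classical in
/-- The family `R_k(G)`. -/
noncomputable def RkFam {V : Type*} [Fintype V] (G : SimpleGraph V) (k : ℕ) :
    Finset (Finset V) :=
  Finset.univ.filter fun A => 1 ≤ A.card ∧ A.card ≤ k ∧ (G.induce (A : Set V)).Connected

/- ### Auxiliary material -/

def T0 : Finset (Sym2 (Fin 3)) := {s(0,1), s(0,2)}

def G0 : SimpleGraph (Fin 3) := (⊤ : SimpleGraph (Fin 3)).deleteEdges (T0 : Set (Sym2 (Fin 3)))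

instance : DecidableRel G0.Adj := fun a b =>
  decidable_of_iff (a ≠ b ∧ s(a,b) ∉ T0) (by simp [G0, SimpleGraph.deleteEdges_adj, T0])

lemma G0_ncard' : ∀ v : Fin 3, (Finset.univ.filter fun u => G0.Reachable u v).card ≤ 2 := by
  decide

lemma G0_ncard (v : Fin 3) : ({u | G0.Reachable u v}).ncard ≤ 2 := by
  have h : {u : Fin 3 | G0.Reachable u v}
      = ↑(Finset.univ.filter fun u => G0.Reachable u v) := by ext u; simp
  rw [h, Set.ncard_coe_finset]
  exact G0_ncard' v

lemma third_vertex : ∀ u v : Fin 3, u ≠ v → ∃ w, w ≠ u ∧ w ≠ v := by decide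

lemma sym2_ne : ∀ u v w : Fin 3, u ≠ v → w ≠ u → w ≠ v →
    s(u,w) ≠ s(u,v) ∧ s(w,v) ≠ s(u,v) := by decide

lemma card_ge_two (T : Finset (Sym2 (Fin 3)))
    (hc : ∀ v : Fin 3,
      ({u | ((⊤ : SimpleGraph (Fin 3)).deleteEdges (T : Set (Sym2 (Fin 3)))).Reachable u v}).ncard ≤ 2) :
    2 ≤ T.card := by
  by_contra h
  push_neg at h
  have hT1 : T.card ≤ 1 := Nat.lt_succ_iff.mp h
  rw [Finset.card_le_one] at hT1
  have hall : ∀ u v : Fin 3,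
      ((⊤ : SimpleGraph (Fin 3)).deleteEdges (T : Set (Sym2 (Fin 3)))).Reachable u v := by
    intro u v
    by_cases huv : u = v
    · subst huv; exact SimpleGraph.Reachable.refl u
    · obtain ⟨w, hwu, hwv⟩ := third_vertex u v huv
      obtain ⟨h1, h2⟩ := sym2_ne u v w huv hwu hwv
      by_cases he : s(u,v) ∈ T
      · have huw : s(u,w) ∉ T := fun hh => h1 (hT1 _ hh _ he)
        have hwv' : s(w,v) ∉ T := fun hh => h2 (hT1 _ hh _ he)
        have a1 : ((⊤ : SimpleGraph (Fin 3)).deleteEdges (T : Set (Sym2 (Fin 3)))).Adj u w := by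
          rw [SimpleGraph.deleteEdges_adj]
          exact ⟨Ne.symm hwu, huw⟩
        have a2 : ((⊤ : SimpleGraph (Fin 3)).deleteEdges (T : Set (Sym2 (Fin 3)))).Adj w v := by
          rw [SimpleGraph.deleteEdges_adj]
          exact ⟨hwv, hwv'⟩
        exact a1.reachable.trans a2.reachable
      · have a1 : ((⊤ : SimpleGraph (Fin 3)).deleteEdges (T : Set (Sym2 (Fin 3)))).Adj u v := by
          rw [SimpleGraph.deleteEdges_adj]
          exact ⟨huv, he⟩
        exact a1.reachable
  have huniv : {u : Fin 3 |
      ((⊤ : SimpleGraph (Fin 3)).deleteEdges (T : Set (Sym2 (Fin 3)))).Reachable u 0} = Set.univ :=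
    Set.eq_univ_of_forall fun u => hall u 0
  have := hc 0
  rw [huniv] at this
  simp [Set.ncard_univ] at this

lemma induce_top_eq {V : Type*} (s : Set V) : (⊤ : SimpleGraph V).induce s = ⊤ := by
  ext a b
  simp [SimpleGraph.top_adj, Subtype.ext_iff]

lemma mem_RkFam (A : Finset (Fin 3)) :
    A ∈ RkFam (⊤ : SimpleGraph (Fin 3)) 2 ↔ 1 ≤ A.card ∧ A.card ≤ 2 := by
  unfold RkFam
  simp only [Finset.mem_filter, Finset.mem_univ, true_and]
  constructor
  · rintro ⟨h1, h2, _⟩; exact ⟨h1, h2⟩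
  · rintro ⟨h1, h2⟩
    refine ⟨h1, h2, ?_⟩
    rw [induce_top_eq]
    have hne : (A : Set (Fin 3)).Nonempty := by exact_mod_cast Finset.card_pos.mp h1
    haveI : Nonempty (A : Set (Fin 3)) := hne.to_subtype
    exact SimpleGraph.connected_top

lemma RkFam_eq : RkFam (⊤ : SimpleGraph (Fin 3)) 2 =
    {{0},{1},{2},{0,1},{0,2},{1,2}} := by
  ext A; rw [mem_RkFam]; revert A; decide

lemma sum_filter0 (x : Finset (Fin 3) → ℝ) :
    ∑ A ∈ (RkFam (⊤ : SimpleGraph (Fin 3)) 2).filter (fun A => (0:Fin 3) ∈ A), x A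
    = x {0} + x {0,1} + x {0,2} := by
  rw [RkFam_eq]
  simp +decide [Finset.filter_insert, Finset.filter_singleton, Finset.sum_insert,
    Finset.mem_insert]
  ring

lemma sum_filter1 (x : Finset (Fin 3) → ℝ) :
    ∑ A ∈ (RkFam (⊤ : SimpleGraph (Fin 3)) 2).filter (fun A => (1:Fin 3) ∈ A), x A
    = x {1} + x {0,1} + x {1,2} := by
  rw [RkFam_eq]
  simp +decide [Finset.filter_insert, Finset.filter_singleton, Finset.sum_insert,
    Finset.mem_insert]
  ring

lemma sum_filter2 (x : Finset (Fin 3) → ℝ) :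
    ∑ A ∈ (RkFam (⊤ : SimpleGraph (Fin 3)) 2).filter (fun A => (2:Fin 3) ∈ A), x A
    = x {2} + x {0,2} + x {1,2} := by
  rw [RkFam_eq]
  simp +decide [Finset.filter_insert, Finset.filter_singleton, Finset.sum_insert,
    Finset.mem_insert]
  ring

lemma sum_obj (x : Finset (Fin 3) → ℝ) :
    ∑ A ∈ RkFam (⊤ : SimpleGraph (Fin 3)) 2,
        x A * (((A ×ˢ Aᶜ).filter fun p => (⊤ : SimpleGraph (Fin 3)).Adj p.1 p.2).card : ℝ)
    = (x {0} + x {1} + x {2} + x {0,1} + x {0,2} + x {1,2}) * 2 := by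
  rw [RkFam_eq]
  have hcard : ∀ A ∈ ({{0},{1},{2},{0,1},{0,2},{1,2}} : Finset (Finset (Fin 3))),
      ((A ×ˢ Aᶜ).filter fun p => (⊤ : SimpleGraph (Fin 3)).Adj p.1 p.2).card = 2 := by decide
  have h2 : ∀ A ∈ ({{0},{1},{2},{0,1},{0,2},{1,2}} : Finset (Finset (Fin 3))),
      x A * (((A ×ˢ Aᶜ).filter fun p => (⊤ : SimpleGraph (Fin 3)).Adj p.1 p.2).card : ℝ)
        = x A * 2 := by
    intro A hA
    rw [hcard A hA]
    norm_num
  rw [Finset.sum_congr rfl h2]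
  simp +decide [Finset.sum_insert, Finset.mem_insert]
  ring

/-- for the triangle `K_3`, `sep_2(K_3) = 2/3` while `sep_2*(K_3) = 1/2`. -/
theorem stmt3 :
    (sInf {x : ℝ | ∃ T : Finset (Sym2 (Fin 3)),
        T ⊆ (⊤ : SimpleGraph (Fin 3)).edgeFinset ∧
        (∀ v : Fin 3,
          ({u | ((⊤ : SimpleGraph (Fin 3)).deleteEdges (T : Set (Sym2 (Fin 3)))).Reachable u v}).ncard ≤ 2) ∧
        x = (T.card : ℝ) / 3} = 2 / 3) ∧
    (sInf {c : ℝ | ∃ x : Finset (Fin 3) → ℝ, (∀ A, 0 ≤ x A) ∧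
        (∀ v : Fin 3, ∑ A ∈ (RkFam (⊤ : SimpleGraph (Fin 3)) 2).filter (fun A => v ∈ A), x A = 1) ∧
        c = (∑ A ∈ RkFam (⊤ : SimpleGraph (Fin 3)) 2,
              x A * (((A ×ˢ Aᶜ).filter fun p => (⊤ : SimpleGraph (Fin 3)).Adj p.1 p.2).card : ℝ)) / 6}
      = 1 / 2) := by
  constructor
  · -- Part 1
    have hmem : (2/3 : ℝ) ∈ {x : ℝ | ∃ T : Finset (Sym2 (Fin 3)),
        T ⊆ (⊤ : SimpleGraph (Fin 3)).edgeFinset ∧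
        (∀ v : Fin 3,
          ({u | ((⊤ : SimpleGraph (Fin 3)).deleteEdges (T : Set (Sym2 (Fin 3)))).Reachable u v}).ncard ≤ 2) ∧
        x = (T.card : ℝ) / 3} := by
      refine ⟨T0, ?_, fun v => G0_ncard v, ?_⟩
      · intro e he
        rw [SimpleGraph.mem_edgeFinset]
        fin_cases he <;> decide
      · norm_num [show T0.card = 2 from by decide]
    have hlb : ∀ y ∈ {x : ℝ | ∃ T : Finset (Sym2 (Fin 3)),
        T ⊆ (⊤ : SimpleGraph (Fin 3)).edgeFinset ∧
        (∀ v : Fin 3,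
          ({u | ((⊤ : SimpleGraph (Fin 3)).deleteEdges (T : Set (Sym2 (Fin 3)))).Reachable u v}).ncard ≤ 2) ∧
        x = (T.card : ℝ) / 3}, (2/3 : ℝ) ≤ y := by
      rintro y ⟨T, _, hc, rfl⟩
      have h2 : (2 : ℝ) ≤ T.card := by exact_mod_cast card_ge_two T hc
      linarith
    exact le_antisymm (csInf_le ⟨2/3, hlb⟩ hmem) (le_csInf ⟨2/3, hmem⟩ hlb)
  · -- Part 2
    set S := {c : ℝ | ∃ x : Finset (Fin 3) → ℝ, (∀ A, 0 ≤ x A) ∧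
        (∀ v : Fin 3, ∑ A ∈ (RkFam (⊤ : SimpleGraph (Fin 3)) 2).filter (fun A => v ∈ A), x A = 1) ∧
        c = (∑ A ∈ RkFam (⊤ : SimpleGraph (Fin 3)) 2,
              x A * (((A ×ˢ Aᶜ).filter fun p => (⊤ : SimpleGraph (Fin 3)).Adj p.1 p.2).card : ℝ)) / 6} with hS
    have hmem : (1/2 : ℝ) ∈ S := by
      refine ⟨fun A => if A.card = 2 then (1/2 : ℝ) else 0, fun A => ?_, fun v => ?_, ?_⟩
      · dsimp only; split <;> norm_num
      · have e0 : ∑ A ∈ (RkFam (⊤ : SimpleGraph (Fin 3)) 2).filter (fun A => (0:Fin 3) ∈ A),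
            (fun A => if A.card = 2 then (1/2 : ℝ) else 0) A = 1 := by
          rw [sum_filter0]
          norm_num [show (({0}:Finset (Fin 3)).card) = 1 from by decide,
            show (({0,1}:Finset (Fin 3)).card) = 2 from by decide,
            show (({0,2}:Finset (Fin 3)).card) = 2 from by decide]
        have e1 : ∑ A ∈ (RkFam (⊤ : SimpleGraph (Fin 3)) 2).filter (fun A => (1:Fin 3) ∈ A),
            (fun A => if A.card = 2 then (1/2 : ℝ) else 0) A = 1 := by
          rw [sum_filter1]
          norm_num [show (({1}:Finset (Fin 3)).card) = 1 from by decide,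
            show (({0,1}:Finset (Fin 3)).card) = 2 from by decide,
            show (({1,2}:Finset (Fin 3)).card) = 2 from by decide]
        have e2 : ∑ A ∈ (RkFam (⊤ : SimpleGraph (Fin 3)) 2).filter (fun A => (2:Fin 3) ∈ A),
            (fun A => if A.card = 2 then (1/2 : ℝ) else 0) A = 1 := by
          rw [sum_filter2]
          norm_num [show (({2}:Finset (Fin 3)).card) = 1 from by decide,
            show (({0,2}:Finset (Fin 3)).card) = 2 from by decide,
            show (({1,2}:Finset (Fin 3)).card) = 2 from by decide]
        fin_cases v
        · exact e0
        · exact e1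
        · exact e2
      · rw [sum_obj]
        norm_num [show (({0}:Finset (Fin 3)).card) = 1 from by decide,
          show (({1}:Finset (Fin 3)).card) = 1 from by decide,
          show (({2}:Finset (Fin 3)).card) = 1 from by decide,
          show (({0,1}:Finset (Fin 3)).card) = 2 from by decide,
          show (({0,2}:Finset (Fin 3)).card) = 2 from by decide,
          show (({1,2}:Finset (Fin 3)).card) = 2 from by decide]
    have hlb : ∀ y ∈ S, (1/2 : ℝ) ≤ y := by
      rintro y ⟨x, hpos, hcon, rfl⟩
      have h0 := hcon 0; rw [sum_filter0 x] at h0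
      have h1 := hcon 1; rw [sum_filter1 x] at h1
      have h2 := hcon 2; rw [sum_filter2 x] at h2
      rw [sum_obj x]
      have p0 := hpos {0}; have p1 := hpos {1}; have p2 := hpos {2}
      have p01 := hpos {0,1}; have p02 := hpos {0,2}; have p12 := hpos {1,2}
      linarith
    exact le_antisymm (csInf_le ⟨1/2, hlb⟩ hmem) (le_csInf ⟨1/2, hmem⟩ hlb)
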